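/- Let q be an odd prime power and let A and C be multiplicative characters of F_q^* with A^2 ≠ ε and C^2 = ε. Then for every λ ∈ F_q, _2F_2(A^2, Ā^2; ε, ε | λ)_q + _2F_2(A^2, Ā^2; ε, ε | −λ)_q = _4F_4(A, φA, Ā, φĀ; ε, φ, C, φC | λ^2)_q. -/

import Mathlib

open Finset

section HDAux

variable {F : Type} [Field F] [Fintype F]

private lemma ffhCharNeTwo (hodd : Odd (Fintype.card F)) : ringChar F ≠ 2 := by
  intro h
  have h2 := FiniteField.even_card_of_char_two h
  rw [Nat.odd_iff] at hodd
  omega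

private lemma ffhFourNeZero (hchar : ringChar F ≠ 2) : (4 : F) ≠ 0 := by
  have h2 : (2 : F) ≠ 0 := Ring.two_ne_zero hchar
  have h : (4 : F) = 2 * 2 := by norm_num
  rw [h]
  exact mul_ne_zero h2 h2

private lemma ffhMulCharNeZero (χ : MulChar F ℂ) {a : F} (ha : a ≠ 0) : χ a ≠ 0 :=
  (ha.isUnit.map χ).ne_zero

private lemma ffhGaussSumOne (θ : AddChar F ℂ) (hθ : θ ≠ 1) :
    gaussSum (1 : MulChar F ℂ) θ = -1 := by
  classical
  have hsum : ∑ a : F, θ a = 0 := by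
    rw [AddChar.sum_eq_zero_iff_ne_zero, AddChar.ne_zero_iff]
    rw [AddChar.ne_one_iff] at hθ
    exact hθ
  have h1 : gaussSum (1 : MulChar F ℂ) θ = ∑ a ∈ univ \ {(0 : F)}, θ a := by
    rw [gaussSum, Finset.sum_eq_sum_sdiff_singleton_add (mem_univ (0 : F)),
      MulChar.map_zero, zero_mul, add_zero]
    refine Finset.sum_congr rfl fun a ha => ?_
    simp only [mem_sdiff, mem_singleton, mem_univ, true_and] at ha
    rw [MulChar.one_apply (Ne.isUnit ha), one_mul]
  have h2 := Finset.sum_eq_sum_sdiff_singleton_add (mem_univ (0 : F)) (fun a => θ a)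
  rw [hsum, AddChar.map_zero_eq_one] at h2
  rw [h1]
  linear_combination -h2

private lemma ffhGaussSumNeZero (θ : AddChar F ℂ) (hθ : θ ≠ 1) (χ : MulChar F ℂ) :
    gaussSum χ θ ≠ 0 := by
  by_cases h : χ = 1
  · rw [h, ffhGaussSumOne θ hθ]; norm_num
  · exact gaussSum_ne_zero_of_nontrivial
      (Nat.cast_ne_zero.mpr Fintype.card_ne_zero) h (AddChar.IsPrimitive.of_ne_one hθ)

private lemma ffhEqQuadChar [DecidableEq F] (hchar : ringChar F ≠ 2) {ψ : MulChar F ℂ}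
    (h2 : ψ ^ 2 = 1) (h1 : ψ ≠ 1) (a : F) :
    ψ a = ((quadraticChar F a : ℤ) : ℂ) := by
  have hsq : ∀ s : F, s ≠ 0 → ψ (s * s) = 1 := by
    intro s hs
    rw [map_mul, ← MulChar.mul_apply, ← pow_two, h2, MulChar.one_apply hs.isUnit]
  have hpm : ∀ b : F, b ≠ 0 → ψ b = 1 ∨ ψ b = -1 := by
    intro b hb
    have h : ψ b * ψ b = 1 := by
      rw [← MulChar.mul_apply, ← pow_two, h2, MulChar.one_apply hb.isUnit]
    exact mul_self_eq_one_iff.mp h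
  have hns : ∀ b : F, ¬ IsSquare b → ψ b = -1 := by
    intro b hb
    have hb0 : b ≠ 0 := fun h => hb (h ▸ ⟨0, (mul_zero 0).symm⟩)
    rcases hpm b hb0 with h | h
    · exfalso
      apply h1
      apply MulChar.ext
      intro u
      rw [MulChar.one_apply_coe]
      by_cases hu : IsSquare (u : F)
      · obtain ⟨s, hs⟩ := hu
        have hs0 : s ≠ 0 := by
          intro h0; rw [h0, mul_zero] at hs; exact u.ne_zero hs
        rw [hs]; exact hsq s hs0
      · have hu0 : (u : F) ≠ 0 := u.ne_zero
        have hqb : quadraticChar F b = -1 := quadraticChar_neg_one_iff_not_isSquare.mpr hb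
        have hqu : quadraticChar F (u : F) = -1 := quadraticChar_neg_one_iff_not_isSquare.mpr hu
        have hbu : IsSquare (b⁻¹ * (u : F)) := by
          have hb0' : b⁻¹ * (u : F) ≠ 0 := mul_ne_zero (inv_ne_zero hb0) hu0
          rw [← quadraticChar_one_iff_isSquare hb0']
          have hqbi : quadraticChar F b⁻¹ = -1 := by
            have hm := map_mul (quadraticChar F) b b⁻¹
            rw [mul_inv_cancel₀ hb0, map_one, hqb] at hm
            linarith
          rw [map_mul, hqbi, hqu]; ring
        obtain ⟨s, hs⟩ := hbu
        have hs0 : s ≠ 0 := by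
          intro h0; rw [h0, mul_zero] at hs
          exact (mul_ne_zero (inv_ne_zero hb0) hu0) hs
        have hu' : (u : F) = b * (s * s) := by
          rw [← hs]; field_simp
        rw [hu', map_mul, h, hsq s hs0, one_mul]
    · exact h
  by_cases ha0 : a = 0
  · rw [ha0, MulChar.map_zero, quadraticChar_zero]; norm_num
  by_cases ha : IsSquare a
  · obtain ⟨s, hs⟩ := ha
    have hq : quadraticChar F a = 1 := (quadraticChar_one_iff_isSquare ha0).mpr ⟨s, hs⟩
    have hs0 : s ≠ 0 := fun h => ha0 (by rw [hs, h, mul_zero])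
    rw [hq, hs, hsq s hs0]; norm_num
  · rw [hns a ha, quadraticChar_neg_one_iff_not_isSquare.mpr ha]; norm_num

private lemma ffhSqEqOneCases [DecidableEq F] (hchar : ringChar F ≠ 2) {φ ψ : MulChar F ℂ}
    (hφ : orderOf φ = 2) (h2 : ψ ^ 2 = 1) : ψ = 1 ∨ ψ = φ := by
  by_cases h1 : ψ = 1
  · exact Or.inl h1
  · right
    have hφ2 : φ ^ 2 = 1 := by rw [← hφ]; exact pow_orderOf_eq_one φ
    have hφ1 : φ ≠ 1 := by
      intro h; rw [h, orderOf_one] at hφ; omega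
    apply MulChar.ext'
    intro a
    rw [ffhEqQuadChar hchar h2 h1 a,
        ffhEqQuadChar hchar hφ2 hφ1 a]

private lemma ffhExistsOddChar (hodd : Odd (Fintype.card F)) :
    ∃ χ : MulChar F ℂ, χ (-1) = -1 := by
  have hc1 : 1 < Fintype.card F := Fintype.one_lt_card
  have hn0 : Fintype.card F - 1 ≠ 0 := by omega
  obtain ⟨χ₀, hχ₀⟩ := MulChar.exists_mulChar_orderOf F dvd_rfl
    (Complex.isPrimitiveRoot_exp (Fintype.card F - 1) hn0)
  have hpm : χ₀ (-1) * χ₀ (-1) = 1 := by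
    rw [← map_mul, neg_mul_neg, one_mul, map_one]
  rcases mul_self_eq_one_iff.mp hpm with h | h
  · exfalso
    have hcard : Fintype.card F % 2 = 1 := Nat.odd_iff.mp hodd
    set m := (Fintype.card F - 1) / 2 with hm
    have hm2 : 2 * m = Fintype.card F - 1 := by omega
    have hm0 : m ≠ 0 := by omega
    have hmn : m < Fintype.card F - 1 := by omega
    have hχm : χ₀ ^ m = 1 := by
      apply MulChar.ext
      intro u
      rw [MulChar.pow_apply_coe, MulChar.one_apply_coe, ← map_pow]
      have hu : (u : F) ^ m = 1 ∨ (u : F) ^ m = -1 := by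
        apply mul_self_eq_one_iff.mp
        rw [← pow_add]
        have hmm : m + m = Fintype.card F - 1 := by omega
        rw [hmm]
        exact FiniteField.pow_card_sub_one_eq_one _ u.ne_zero
      rcases hu with h' | h'
      · rw [h', map_one]
      · rw [h', h]
    have hdvd : Fintype.card F - 1 ∣ m := hχ₀ ▸ orderOf_dvd_of_pow_eq_one hχm
    exact absurd (Nat.le_of_dvd (by omega) hdvd) (by omega)
  · exact ⟨χ₀, h⟩

private lemma ffhJacobiSq (hodd : Odd (Fintype.card F)) {φ : MulChar F ℂ}
    (hφ : orderOf φ = 2) {χ : MulChar F ℂ} (hχ : χ ≠ 1) :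
    jacobiSum χ χ * χ 4 = jacobiSum φ χ := by
  classical
  have hchar := ffhCharNeTwo hodd
  have h2 : (2 : F) ≠ 0 := Ring.two_ne_zero hchar
  have h4 : (4 : F) ≠ 0 := ffhFourNeZero hchar
  have hφqc : ∀ a : F, φ a = ((quadraticChar F a : ℤ) : ℂ) :=
    ffhEqQuadChar hchar (by rw [← hφ]; exact pow_orderOf_eq_one φ)
      (fun h => by rw [h, orderOf_one] at hφ; omega)
  have step1 : jacobiSum χ χ * χ 4 = ∑ s : F, χ (1 - s ^ 2) := by
    have he : Function.Bijective (fun s : F => (1 + s) / 2) :=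
      Function.bijective_iff_has_inverse.mpr ⟨fun t => 2 * t - 1,
        fun s => by field_simp; ring, fun t => by field_simp; ring⟩
    rw [jacobiSum, ← Function.Bijective.sum_comp he (fun t => χ t * χ (1 - t)),
      Finset.sum_mul]
    refine Finset.sum_congr rfl fun s _ => ?_
    rw [← map_mul, ← map_mul]
    congr 1
    field_simp
    ring
  have step2 : ∑ s : F, χ (1 - s ^ 2)
      = ∑ u : F, (((quadraticChar F u : ℤ) : ℂ) + 1) * χ (1 - u) := by
    rw [Finset.sum_comp (fun u : F => χ (1 - u)) (fun s : F => s ^ 2),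
      Finset.sum_subset (Finset.subset_univ ((univ : Finset F).image (fun s : F => s ^ 2)))]
    · refine Finset.sum_congr rfl fun u _ => ?_
      rw [nsmul_eq_mul]
      congr 1
      have hcount : ((univ.filter fun a : F => a ^ 2 = u).card : ℤ)
          = quadraticChar F u + 1 := by
        rw [← quadraticChar_card_sqrts hchar u]
        congr 1
        simp [Set.toFinset_setOf]
      push_cast [← hcount]
      norm_cast
    · intro x _ hx
      have : (univ.filter fun a : F => a ^ 2 = x).card = 0 := by
        rw [Finset.card_eq_zero, Finset.filter_eq_empty_iff]
        intro a _ ha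
        exact hx (Finset.mem_image.mpr ⟨a, mem_univ a, ha⟩)
      rw [this, zero_smul]
  have step3 : ∑ u : F, (((quadraticChar F u : ℤ) : ℂ) + 1) * χ (1 - u) = jacobiSum φ χ := by
    have hzero : ∑ u : F, χ (1 - u) = 0 := by
      have he : ∑ u : F, χ (1 - u) = ∑ v : F, χ v :=
        Fintype.sum_equiv (Equiv.subLeft 1) _ _ (fun u => by simp)
      rw [he]
      exact MulChar.sum_eq_zero_of_ne_one hχ
    rw [jacobiSum]
    calc ∑ u : F, (((quadraticChar F u : ℤ) : ℂ) + 1) * χ (1 - u)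
        = ∑ u : F, (((quadraticChar F u : ℤ) : ℂ) * χ (1 - u) + χ (1 - u)) := by
          refine Finset.sum_congr rfl fun u _ => ?_; ring
      _ = (∑ u : F, ((quadraticChar F u : ℤ) : ℂ) * χ (1 - u)) + ∑ u : F, χ (1 - u) :=
          Finset.sum_add_distrib
      _ = ∑ x : F, φ x * χ (1 - x) := by
          rw [hzero, add_zero]
          exact Finset.sum_congr rfl fun u _ => by rw [hφqc u]
  rw [step1, step2, step3]

private lemma ffhHD (hodd : Odd (Fintype.card F)) (θ : AddChar F ℂ) (hθ : θ ≠ 1)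
    {φ : MulChar F ℂ} (hφ : orderOf φ = 2) (χ : MulChar F ℂ) :
    gaussSum χ θ * gaussSum (φ * χ) θ * χ 4 = gaussSum φ θ * gaussSum (χ ^ 2) θ := by
  classical
  have hchar := ffhCharNeTwo hodd
  have h2 : (2 : F) ≠ 0 := Ring.two_ne_zero hchar
  have h4 : (4 : F) ≠ 0 := ffhFourNeZero hchar
  have hφ2 : φ ^ 2 = 1 := by rw [← hφ]; exact pow_orderOf_eq_one φ
  have hφ1 : φ ≠ 1 := fun h => by rw [h, orderOf_one] at hφ; omega
  by_cases hχ1 : χ = 1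
  · rw [hχ1, mul_one, one_pow, MulChar.one_apply h4.isUnit, mul_one, mul_comm]
  by_cases hχφ : χ = φ
  · rw [hχφ]
    have hφ4 : φ (4 : F) = 1 := by
      rw [show (4 : F) = 2 * 2 by norm_num, map_mul, ← MulChar.mul_apply, ← pow_two, hφ2,
        MulChar.one_apply h2.isUnit]
    rw [hφ4, mul_one, ← pow_two]
  have hχ2 : χ ^ 2 ≠ 1 := by
    intro h
    rcases ffhSqEqOneCases hchar hφ h with h' | h'
    · exact hχ1 h'
    · exact hχφ h'
  have hφχ : φ * χ ≠ 1 := by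
    intro h
    have h' : χ = φ⁻¹ := eq_inv_of_mul_eq_one_right h
    have hinv : φ⁻¹ = φ := by
      rw [inv_eq_iff_mul_eq_one, ← pow_two]; exact hφ2
    exact hχφ (h'.trans hinv)
  have hχχ : χ * χ ≠ 1 := by rwa [← pow_two]
  have A1 := jacobiSum_mul_nontrivial hχχ θ
  have A2 := jacobiSum_mul_nontrivial hφχ θ
  have HL := ffhJacobiSq hodd hφ hχ1
  have ha := ffhGaussSumNeZero θ hθ χ
  have hj1 : jacobiSum χ χ ≠ 0 := by
    intro h
    rw [h, mul_zero] at A1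
    exact (mul_ne_zero ha ha) A1.symm
  have key : (gaussSum χ θ * gaussSum (φ * χ) θ * χ 4
      - gaussSum φ θ * gaussSum (χ ^ 2) θ) * jacobiSum χ χ = 0 := by
    rw [pow_two]
    linear_combination gaussSum χ θ * A2 + gaussSum χ θ * gaussSum (φ * χ) θ * HL
      - gaussSum φ θ * A1
  rcases mul_eq_zero.mp key with h | h
  · exact sub_eq_zero.mp h
  · exact absurd h hj1

private lemma ffhSumSq (hodd : Odd (Fintype.card F)) {φ : MulChar F ℂ}
    (hφ : orderOf φ = 2) [Fintype (MulChar F ℂ)] (f : MulChar F ℂ → ℂ) :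
    ∑ ψ : MulChar F ℂ, f (ψ ^ 2) = ∑ χ : MulChar F ℂ, (1 + χ (-1)) * f χ := by
  classical
  have hchar := ffhCharNeTwo hodd
  have hφ2 : φ ^ 2 = 1 := by rw [← hφ]; exact pow_orderOf_eq_one φ
  have hφ1 : φ ≠ 1 := fun h => by rw [h, orderOf_one] at hφ; omega
  have hfib : ∀ χ : MulChar F ℂ, ∀ ψ₀, ψ₀ ^ 2 = χ →
      (univ.filter fun ψ : MulChar F ℂ => ψ ^ 2 = χ) = {ψ₀, φ * ψ₀} := by
    intro χ ψ₀ hψ₀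
    ext ψ
    simp only [mem_filter, mem_univ, true_and, mem_insert, mem_singleton]
    constructor
    · intro h
      have h12 : (ψ * ψ₀⁻¹) ^ 2 = 1 := by
        rw [mul_pow, inv_pow, hψ₀, h, mul_inv_cancel]
      rcases ffhSqEqOneCases hchar hφ h12 with h' | h'
      · exact Or.inl (mul_inv_eq_one.mp h')
      · right
        rw [← h', inv_mul_cancel_right]
    · rintro (rfl | rfl)
      · exact hψ₀
      · rw [mul_pow, hφ2, one_mul, hψ₀]
  have hcard2 : ∀ χ : MulChar F ℂ, ∀ ψ₀, ψ₀ ^ 2 = χ →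
      (univ.filter fun ψ : MulChar F ℂ => ψ ^ 2 = χ).card = 2 := by
    intro χ ψ₀ h
    rw [hfib χ ψ₀ h]
    refine Finset.card_pair ?_
    intro heq
    exact hφ1 (right_eq_mul.mp heq)
  have hneg : ∀ χ : MulChar F ℂ, χ (-1) * χ (-1) = 1 := by
    intro χ
    rw [← map_mul, neg_mul_neg, one_mul, map_one]
  have himage : ∀ χ : MulChar F ℂ, χ (-1) = 1 → ∃ ψ₀ : MulChar F ℂ, ψ₀ ^ 2 = χ := by
    obtain ⟨χ₁, hχ₁⟩ := ffhExistsOddChar hodd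
    set I := (univ : Finset (MulChar F ℂ)).image (· ^ 2) with hI
    set E := (univ : Finset (MulChar F ℂ)).filter (fun χ => χ (-1) = 1) with hE
    have hevenI : ∀ χ ∈ I, χ (-1) = 1 := by
      intro χ hχ
      obtain ⟨ψ₀, _, h⟩ := Finset.mem_image.mp hχ
      rw [← h, MulChar.pow_apply' _ two_ne_zero, ← map_pow, neg_one_sq, map_one]
    have hsubIE : I ⊆ E := fun χ hχ => Finset.mem_filter.mpr ⟨mem_univ _, hevenI χ hχ⟩
    have hcardU : (univ : Finset (MulChar F ℂ)).card
        = ∑ χ ∈ I, (univ.filter fun ψ : MulChar F ℂ => ψ ^ 2 = χ).card :=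
      Finset.card_eq_sum_card_fiberwise (fun ψ _ => Finset.mem_image_of_mem _ (mem_univ ψ))
    have hcardU2 : (univ : Finset (MulChar F ℂ)).card = 2 * I.card := by
      rw [hcardU, Finset.sum_congr rfl (fun χ hχ => ?_), Finset.sum_const, smul_eq_mul, mul_comm]
      obtain ⟨ψ₀, _, h⟩ := Finset.mem_image.mp hχ
      exact hcard2 χ ψ₀ h
    have hinj : ∀ χ ∈ E, χ₁ * χ ∈ univ \ E := by
      intro χ hχ
      have hχ' := (Finset.mem_filter.mp hχ).2
      rw [Finset.mem_sdiff]
      refine ⟨mem_univ _, ?_⟩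
      rw [Finset.mem_filter]
      rintro ⟨-, habs⟩
      rw [MulChar.mul_apply, hχ₁, hχ'] at habs
      norm_num at habs
    have hcardE : E.card ≤ (univ \ E).card := by
      apply Finset.card_le_card_of_injOn (fun χ => χ₁ * χ) hinj
      intro a _ b _ h
      exact mul_left_cancel h
    have hsd : (univ \ E).card = (univ : Finset (MulChar F ℂ)).card - E.card :=
      Finset.card_sdiff_of_subset (Finset.subset_univ E)
    have hIcard : I.card ≤ E.card := Finset.card_le_card hsubIE
    have hEcard : E.card ≤ (univ : Finset (MulChar F ℂ)).card := Finset.card_le_univ E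
    have hIE : I = E := by
      refine Finset.eq_of_subset_of_card_le hsubIE ?_
      omega
    intro χ hχ
    have hmem : χ ∈ E := Finset.mem_filter.mpr ⟨mem_univ _, hχ⟩
    rw [← hIE] at hmem
    obtain ⟨ψ₀, _, h⟩ := Finset.mem_image.mp hmem
    exact ⟨ψ₀, h⟩
  have key : ∑ ψ : MulChar F ℂ, f (ψ ^ 2)
      = ∑ χ : MulChar F ℂ, ∑ ψ ∈ univ.filter (fun ψ : MulChar F ℂ => ψ ^ 2 = χ), f (ψ ^ 2) :=
    (Finset.sum_fiberwise_of_maps_to (fun x _ => mem_univ _) _).symm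
  rw [key]
  refine Finset.sum_congr rfl fun χ _ => ?_
  have hconst : ∑ ψ ∈ univ.filter (fun ψ : MulChar F ℂ => ψ ^ 2 = χ), f (ψ ^ 2)
      = ∑ _ψ ∈ univ.filter (fun ψ : MulChar F ℂ => ψ ^ 2 = χ), f χ := by
    refine Finset.sum_congr rfl fun ψ hψ => ?_
    rw [(Finset.mem_filter.mp hψ).2]
  rw [hconst, Finset.sum_const, nsmul_eq_mul]
  by_cases hχI : ∃ ψ₀ : MulChar F ℂ, ψ₀ ^ 2 = χ
  · obtain ⟨ψ₀, h⟩ := hχI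
    rw [hcard2 χ ψ₀ h]
    have hone : χ (-1) = 1 := by
      rw [← h, MulChar.pow_apply' _ two_ne_zero, ← map_pow, neg_one_sq, map_one]
    rw [hone]
    norm_num
  · have hc0 : (univ.filter fun ψ : MulChar F ℂ => ψ ^ 2 = χ) = ∅ := by
      rw [Finset.filter_eq_empty_iff]
      exact fun ψ _ h => hχI ⟨ψ, h⟩
    rw [hc0, Finset.card_empty]
    have hval : χ (-1) = -1 := by
      rcases mul_self_eq_one_iff.mp (hneg χ) with h | h
      · exact absurd (himage χ h) hχI
      · exact h
    rw [hval]
    norm_num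

end HDAux

/-- The finite field hypergeometric function `ₘFₘ` of McCarthy, with upper parameters `A`,
lower parameters `B` (indexed by a finite type `ι`), and argument `lam`. -/
noncomputable def ffHyp {F : Type} [Field F] [Fintype F] (θ : AddChar F ℂ)
    {ι : Type} [Fintype ι] (A B : ι → MulChar F ℂ) (lam : F) : ℂ :=
  letI : Fintype (MulChar F ℂ) := Fintype.ofFinite _
  (-1 : ℂ) / ((Fintype.card F : ℂ) - 1) *
    ∑ χ : MulChar F ℂ,
      (∏ i, (gaussSum (A i * χ) θ / gaussSum (A i) θ) *
        (gaussSum ((B i * χ)⁻¹) θ / gaussSum ((B i)⁻¹) θ)) *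
      χ (-1) ^ (Fintype.card ι) * χ lam

set_option maxHeartbeats 2000000 in
theorem stmt0 {F : Type} [Field F] [Fintype F] (hodd : Odd (Fintype.card F))
    (θ : AddChar F ℂ) (hθ : θ ≠ 1)
    (φ : MulChar F ℂ) (hφ : orderOf φ = 2)
    (A C : MulChar F ℂ) (hA : A ^ 2 ≠ 1) (hC : C ^ 2 = 1) (lam : F) :
    ffHyp θ ![A ^ 2, A⁻¹ ^ 2] ![1, 1] lam + ffHyp θ ![A ^ 2, A⁻¹ ^ 2] ![1, 1] (-lam)
      = ffHyp θ ![A, φ * A, A⁻¹, φ * A⁻¹] ![1, φ, C, φ * C] (lam ^ 2) := by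
  classical
  have hchar := ffhCharNeTwo hodd
  have h2 : (2 : F) ≠ 0 := Ring.two_ne_zero hchar
  have h4 : (4 : F) ≠ 0 := ffhFourNeZero hchar
  have hφ2 : φ ^ 2 = 1 := by rw [← hφ]; exact pow_orderOf_eq_one φ
  have hφ1 : φ ≠ 1 := fun h => by rw [h, orderOf_one] at hφ; omega
  have hφinv : φ⁻¹ = φ := by rw [inv_eq_iff_mul_eq_one, ← pow_two]; exact hφ2
  have hCinv : C⁻¹ = C := by rw [inv_eq_iff_mul_eq_one, ← pow_two]; exact hC
  have hG := ffhGaussSumNeZero θ hθ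
  have h4v : ∀ χ : MulChar F ℂ, χ (4 : F) ≠ 0 := fun χ => ffhMulCharNeZero χ h4
  have hd := ffhHD hodd θ hθ hφ
  have hdEq : ∀ χ : MulChar F ℂ, gaussSum (χ ^ 2) θ
      = gaussSum χ θ * gaussSum (φ * χ) θ * χ 4 / gaussSum φ θ := by
    intro χ
    rw [eq_div_iff (hG φ)]
    linear_combination -(hd χ)
  letI instM : Fintype (MulChar F ℂ) := Fintype.ofFinite _
  unfold ffHyp
  rw [← mul_add, ← Finset.sum_add_distrib]
  congr 1
  refine (Finset.sum_congr rfl fun χ _ => ?_).trans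
    (((ffhSumSq hodd hφ (fun χ : MulChar F ℂ =>
      (∏ i : Fin 2, (gaussSum (![A ^ 2, A⁻¹ ^ 2] i * χ) θ / gaussSum (![A ^ 2, A⁻¹ ^ 2] i) θ) *
        (gaussSum ((![(1 : MulChar F ℂ), 1] i * χ)⁻¹) θ /
          gaussSum ((![(1 : MulChar F ℂ), 1] i)⁻¹) θ)) * χ lam)).symm).trans
      (Finset.sum_congr rfl fun ψ _ => ?_))
  · -- left pointwise
    have hn1 : χ (-1) * χ (-1) = 1 := by rw [← map_mul, neg_mul_neg, one_mul, map_one]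
    have hml : χ (-lam) = χ (-1) * χ lam := by rw [← map_mul, neg_one_mul]
    have hpow : χ (-1) ^ 2 = 1 := by
      rw [show χ (-1) ^ 2 = χ (-1) * χ (-1) from by ring, hn1]
    simp only [Fintype.card_fin]
    rw [hpow, hml]
    ring
  · -- right pointwise
    have hn1 : ψ (-1) * ψ (-1) = 1 := by rw [← map_mul, neg_mul_neg, one_mul, map_one]
    have hm4 : ψ (-1) ^ 4 = 1 := by
      rw [show ψ (-1) ^ 4 = (ψ (-1) * ψ (-1)) ^ 2 from by ring, hn1, one_pow]
    have hlam : (ψ ^ 2) lam = ψ (lam ^ 2) := by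
      rw [MulChar.pow_apply' _ two_ne_zero, ← map_pow]
    simp only [Fin.prod_univ_succ, Fin.prod_univ_zero, Matrix.cons_val_zero, Matrix.cons_val_succ,
      Fintype.card_fin, mul_one, one_mul, inv_one]
    rw [hm4, mul_one, hlam]
    simp only [mul_inv, hφinv, hCinv, mul_assoc, ← mul_pow, ← inv_pow]
    rw [hdEq (A * ψ), hdEq A, hdEq (A⁻¹ * ψ), hdEq A⁻¹, hdEq ψ⁻¹]
    have ht := h4v ψ⁻¹
    have h1C := hd (C * ψ⁻¹)
    rw [mul_pow, hC, one_mul, MulChar.mul_apply] at h1C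
    have h2C := hd ψ⁻¹
    have hxmul : gaussSum (C * ψ⁻¹) θ * gaussSum (φ * (C * ψ⁻¹)) θ * C 4
        = gaussSum ψ⁻¹ θ * gaussSum (φ * ψ⁻¹) θ := by
      have heq : (gaussSum (C * ψ⁻¹) θ * gaussSum (φ * (C * ψ⁻¹)) θ * C 4) * ψ⁻¹ 4
          = (gaussSum ψ⁻¹ θ * gaussSum (φ * ψ⁻¹) θ) * ψ⁻¹ 4 := by
        linear_combination h1C - h2C
      exact mul_right_cancel₀ ht heq
    have hymul := hd C
    rw [hC] at hymul
    have hx1 : gaussSum (C * ψ⁻¹) θ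
        = gaussSum ψ⁻¹ θ * gaussSum (φ * ψ⁻¹) θ / (C 4 * gaussSum (φ * (C * ψ⁻¹)) θ) := by
      rw [eq_div_iff (mul_ne_zero (h4v C) (hG _))]
      linear_combination hxmul
    have hy1 : gaussSum C θ = gaussSum φ θ * gaussSum 1 θ / (C 4 * gaussSum (φ * C) θ) := by
      rw [eq_div_iff (mul_ne_zero (h4v C) (hG _))]
      linear_combination hymul
    rw [hx1, hy1]
    have e1 : (A * ψ) (4 : F) = A 4 * ψ 4 := MulChar.mul_apply A ψ 4
    have e2 : (A⁻¹ * ψ) (4 : F) = (A 4)⁻¹ * ψ 4 := by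
      rw [MulChar.mul_apply, MulChar.inv_apply_eq_inv']
    have e3 : A⁻¹ (4 : F) = (A 4)⁻¹ := MulChar.inv_apply_eq_inv' A 4
    have e4 : ψ⁻¹ (4 : F) = (ψ 4)⁻¹ := MulChar.inv_apply_eq_inv' ψ 4
    rw [e1, e2, e3, e4]
    have n1 := hG (A * ψ)
    have n2 := hG (φ * (A * ψ))
    have n3 := hG A
    have n4 := hG (φ * A)
    have n5 := hG (A⁻¹ * ψ)
    have n6 := hG (φ * (A⁻¹ * ψ))
    have n7 := hG A⁻¹
    have n8 := hG (φ * A⁻¹)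
    have n9 := hG ψ⁻¹
    have n10 := hG (φ * ψ⁻¹)
    have n11 := hG φ
    have n12 := hG (1 : MulChar F ℂ)
    have n13 := hG (φ * (C * ψ⁻¹))
    have n14 := hG (φ * C)
    have v1 := h4v A
    have v2 := h4v ψ
    have v3 := h4v C
    field_simp
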